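/- arXiv:2009.11259 — 3 statements merged into one kernel-verified Lean document; each statement's English description precedes it below -/
import Mathlib

section
/- Let r(y) := 1 + (1/4)(cos(2πy₁) − 2 sin(2πy₁)) sin(2πy₂) and let A(y) be the 2×2 diagonal matrix with entries a₁₁(y) = (1 − (1/2) sin(2πy₁) sin(2πy₂))/r(y), a₂₂(y) = (1 + (1/2) sin(2πy₁) sin(2πy₂))/r(y), a₁₂ = a₂₁ = 0. Then r is the invariant measure of A, namely: (i) ∂²₁₁(a₁₁ r)(y) + ∂²₂₂(a₂₂ r)(y) = 0 for every y ∈ ℝ²; (ii) r(y + k) = r(y) for every y ∈ ℝ² and k ∈ ℤ²; (iii) r(y) > 0 for every y ∈ ℝ²; (iv) ∫_Y r(y) dy = 1, where Y = [0,1]². -/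
/-- First partial derivative (w.r.t. the first variable) of a function of two real variables. -/
noncomputable def p1 (f : ℝ → ℝ → ℝ) : ℝ → ℝ → ℝ := fun x y => deriv (fun t => f t y) x

/-- Second partial derivative (w.r.t. the second variable). -/
noncomputable def p2 (f : ℝ → ℝ → ℝ) : ℝ → ℝ → ℝ := fun x y => deriv (fun t => f x t) y

/-- The invariant measure `r`. -/
noncomputable def rr (y₁ y₂ : ℝ) : ℝ :=
  1 + (1/4) * (Real.cos (2 * Real.pi * y₁) - 2 * Real.sin (2 * Real.pi * y₁))
    * Real.sin (2 * Real.pi * y₂)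

/-- Entry `a₁₁` of the `c`-bad matrix `A`. -/
noncomputable def a11 (y₁ y₂ : ℝ) : ℝ :=
  (1 - (1/2) * Real.sin (2 * Real.pi * y₁) * Real.sin (2 * Real.pi * y₂)) / rr y₁ y₂

/-- Entry `a₂₂` of the `c`-bad matrix `A`. -/
noncomputable def a22 (y₁ y₂ : ℝ) : ℝ :=
  (1 + (1/2) * Real.sin (2 * Real.pi * y₁) * Real.sin (2 * Real.pi * y₂)) / rr y₁ y₂

lemma rr_pos (y₁ y₂ : ℝ) : 0 < rr y₁ y₂ := by
  unfold rr
  nlinarith [Real.neg_one_le_sin (2 * Real.pi * y₁), Real.sin_le_one (2 * Real.pi * y₁),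
    Real.neg_one_le_sin (2 * Real.pi * y₂), Real.sin_le_one (2 * Real.pi * y₂),
    Real.neg_one_le_cos (2 * Real.pi * y₁), Real.cos_le_one (2 * Real.pi * y₁)]

lemma hsin (x : ℝ) : HasDerivAt (fun s => Real.sin (2 * Real.pi * s))
    (2 * Real.pi * Real.cos (2 * Real.pi * x)) x := by
  have h : HasDerivAt (fun s : ℝ => 2 * Real.pi * s) (2 * Real.pi) x := by
    simpa using (hasDerivAt_id x).const_mul (2 * Real.pi)
  have key : HasDerivAt (fun s => Real.sin (2 * Real.pi * s))
      (Real.cos (2 * Real.pi * x) * (2 * Real.pi)) x := by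
    simpa [Function.comp_def] using (Real.hasDerivAt_sin (2 * Real.pi * x)).comp x h
  have e : 2 * Real.pi * Real.cos (2 * Real.pi * x)
      = Real.cos (2 * Real.pi * x) * (2 * Real.pi) := mul_comm _ _
  rw [e]; exact key

lemma hcos (x : ℝ) : HasDerivAt (fun s => Real.cos (2 * Real.pi * s))
    (-(2 * Real.pi * Real.sin (2 * Real.pi * x))) x := by
  have h : HasDerivAt (fun s : ℝ => 2 * Real.pi * s) (2 * Real.pi) x := by
    simpa using (hasDerivAt_id x).const_mul (2 * Real.pi)
  have key : HasDerivAt (fun s => Real.cos (2 * Real.pi * s))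
      (-Real.sin (2 * Real.pi * x) * (2 * Real.pi)) x := by
    simpa [Function.comp_def] using (Real.hasDerivAt_cos (2 * Real.pi * x)).comp x h
  have e : -(2 * Real.pi * Real.sin (2 * Real.pi * x))
      = -Real.sin (2 * Real.pi * x) * (2 * Real.pi) := by ring
  rw [e]; exact key

lemma a11rr (s t : ℝ) : a11 s t * rr s t
    = 1 - (1/2) * Real.sin (2 * Real.pi * s) * Real.sin (2 * Real.pi * t) := by
  unfold a11
  exact div_mul_cancel₀ _ (rr_pos s t).ne'

lemma a22rr (s t : ℝ) : a22 s t * rr s t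
    = 1 + (1/2) * Real.sin (2 * Real.pi * s) * Real.sin (2 * Real.pi * t) := by
  unfold a22
  exact div_mul_cancel₀ _ (rr_pos s t).ne'

/-- `r` is the invariant measure of `A`: it satisfies `∂²₁₁(a₁₁ r) + ∂²₂₂(a₂₂ r) = 0`,
is `ℤ²`-periodic, positive, and has unit mass on the unit cell `Y = [0,1]²`. -/
theorem invariant_measure_of_c_bad_matrix :
    (∀ y₁ y₂ : ℝ,
        p1 (p1 (fun s t => a11 s t * rr s t)) y₁ y₂
          + p2 (p2 (fun s t => a22 s t * rr s t)) y₁ y₂ = 0) ∧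
    (∀ (y₁ y₂ : ℝ) (k₁ k₂ : ℤ), rr (y₁ + k₁) (y₂ + k₂) = rr y₁ y₂) ∧
    (∀ y₁ y₂ : ℝ, 0 < rr y₁ y₂) ∧
    (∫ y₁ in (0:ℝ)..1, ∫ y₂ in (0:ℝ)..1, rr y₁ y₂) = 1 := by
  refine ⟨?_, ?_, rr_pos, ?_⟩
  · intro y₁ y₂
    have h1 : p1 (p1 (fun s t => a11 s t * rr s t)) y₁ y₂
        = 2 * Real.pi * (2 * Real.pi) * ((1/2) * Real.sin (2 * Real.pi * y₁)
          * Real.sin (2 * Real.pi * y₂)) := by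
      have inner : (fun s => deriv (fun u => a11 u y₂ * rr u y₂) s)
          = fun s => -((1/2) * (2 * Real.pi * Real.cos (2 * Real.pi * s))
              * Real.sin (2 * Real.pi * y₂)) := by
        funext s
        have hfe : (fun u => a11 u y₂ * rr u y₂)
            = fun u => 1 - (1/2) * Real.sin (2 * Real.pi * u) * Real.sin (2 * Real.pi * y₂) := by
          funext u; exact a11rr u y₂
        have hd : HasDerivAt
            (fun u => 1 - (1/2) * Real.sin (2 * Real.pi * u) * Real.sin (2 * Real.pi * y₂))
            (-((1/2) * (2 * Real.pi * Real.cos (2 * Real.pi * s))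
              * Real.sin (2 * Real.pi * y₂))) s :=
          (((hsin s).const_mul (1/2)).mul_const (Real.sin (2 * Real.pi * y₂))).const_sub 1
        rw [hfe]
        exact hd.deriv
      have hd2 : HasDerivAt
          (fun s => -((1/2) * (2 * Real.pi * Real.cos (2 * Real.pi * s))
            * Real.sin (2 * Real.pi * y₂)))
          (-((1/2) * (2 * Real.pi * -(2 * Real.pi * Real.sin (2 * Real.pi * y₁)))
            * Real.sin (2 * Real.pi * y₂))) y₁ :=
        ((((hcos y₁).const_mul (2 * Real.pi)).const_mul (1/2)).mul_const
          (Real.sin (2 * Real.pi * y₂))).neg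
      simp only [p1]
      rw [inner, hd2.deriv]; ring
    have h2 : p2 (p2 (fun s t => a22 s t * rr s t)) y₁ y₂
        = -(2 * Real.pi * (2 * Real.pi) * ((1/2) * Real.sin (2 * Real.pi * y₁)
          * Real.sin (2 * Real.pi * y₂))) := by
      have inner : (fun t => deriv (fun u => a22 y₁ u * rr y₁ u) t)
          = fun t => (1/2) * Real.sin (2 * Real.pi * y₁)
              * (2 * Real.pi * Real.cos (2 * Real.pi * t)) := by
        funext t
        have hfe : (fun u => a22 y₁ u * rr y₁ u)
            = fun u => 1 + (1/2) * Real.sin (2 * Real.pi * y₁) * Real.sin (2 * Real.pi * u) := by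
          funext u; exact a22rr y₁ u
        have hd : HasDerivAt
            (fun u => 1 + (1/2) * Real.sin (2 * Real.pi * y₁) * Real.sin (2 * Real.pi * u))
            ((1/2) * Real.sin (2 * Real.pi * y₁)
              * (2 * Real.pi * Real.cos (2 * Real.pi * t))) t := by
          have := ((hsin t).const_mul ((1/2) * Real.sin (2 * Real.pi * y₁))).const_add 1
          simpa [mul_assoc] using this
        rw [hfe]
        exact hd.deriv
      have hd2 : HasDerivAt
          (fun t => (1/2) * Real.sin (2 * Real.pi * y₁)
            * (2 * Real.pi * Real.cos (2 * Real.pi * t)))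
          ((1/2) * Real.sin (2 * Real.pi * y₁)
            * (2 * Real.pi * -(2 * Real.pi * Real.sin (2 * Real.pi * y₂)))) y₂ := by
        have := ((hcos y₂).const_mul (2 * Real.pi)).const_mul
          ((1/2) * Real.sin (2 * Real.pi * y₁))
        simpa [mul_assoc] using this
      simp only [p2]
      rw [inner, hd2.deriv]; ring
    rw [h1, h2]; ring
  · intro y₁ y₂ k₁ k₂
    have e1 : 2 * Real.pi * (y₁ + (k₁ : ℝ)) = 2 * Real.pi * y₁ + (k₁ : ℤ) * (2 * Real.pi) := by
      ring
    have e2 : 2 * Real.pi * (y₂ + (k₂ : ℝ)) = 2 * Real.pi * y₂ + (k₂ : ℤ) * (2 * Real.pi) := by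
      ring
    unfold rr
    rw [e1, e2, Real.sin_add_int_mul_two_pi, Real.sin_add_int_mul_two_pi,
      Real.cos_add_int_mul_two_pi]
  · have hsint : ∫ t in (0:ℝ)..1, Real.sin (2 * Real.pi * t) = 0 := by
      rw [intervalIntegral.integral_comp_mul_left (fun x => Real.sin x)
        (by positivity : (2:ℝ) * Real.pi ≠ 0)]
      simp [Real.cos_two_pi]
    have hinner : ∀ y₁ : ℝ, (∫ y₂ in (0:ℝ)..1, rr y₁ y₂) = 1 := by
      intro y₁
      have : (fun y₂ => rr y₁ y₂) = fun y₂ => 1 +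
          ((1/4) * (Real.cos (2 * Real.pi * y₁) - 2 * Real.sin (2 * Real.pi * y₁)))
            * Real.sin (2 * Real.pi * y₂) := by
        funext y₂; unfold rr; ring
      rw [this, intervalIntegral.integral_add (intervalIntegrable_const)
        ((by fun_prop : Continuous fun y₂ : ℝ =>
          (1/4) * (Real.cos (2 * Real.pi * y₁) - 2 * Real.sin (2 * Real.pi * y₁))
            * Real.sin (2 * Real.pi * y₂)).intervalIntegrable 0 1),
        intervalIntegral.integral_const_mul, hsint]
      simp
    calc (∫ y₁ in (0:ℝ)..1, ∫ y₂ in (0:ℝ)..1, rr y₁ y₂)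
        = ∫ y₁ in (0:ℝ)..1, (1:ℝ) := by
          apply intervalIntegral.integral_congr; intro y₁ _; exact hinner y₁
      _ = 1 := by simp
end

section
/- Let r(y) := 1 + (1/4)(cos(2πy₁) − 2 sin(2πy₁)) sin(2πy₂), let A(y) be the 2×2 diagonal matrix with entries a₁₁(y) = (1 − (1/2) sin(2πy₁) sin(2πy₂))/r(y), a₂₂(y) = (1 + (1/2) sin(2πy₁) sin(2πy₂))/r(y), a₁₂ = a₂₁ = 0, and let A^{div}(y) be the 2×2 matrix with entries A^{div}₁₁(y) = 1 − (1/2) sin(2πy₁) sin(2πy₂), A^{div}₁₂(y) = (1/2) cos(2πy₁) cos(2πy₂), A^{div}₂₁(y) = −(1/2) cos(2πy₁) cos(2πy₂), A^{div}₂₂(y) = 1 + (1/2) sin(2πy₁) sin(2πy₂). Then for every twice continuously differentiable function u : ℝ² → ℝ and every y ∈ ℝ²: ∑_{i=1}^{2} ∂_i ( ∑_{j=1}^{2} A^{div}_{ij}(y) ∂_j u(y) ) = r(y) ( a₁₁(y) ∂²₁₁u(y) + a₂₂(y) ∂²₂₂u(y) ), i.e., ∇·(A^{div}∇u) = r A :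 D²u. -/
/-- Entry `A^{div}₁₁`. -/
noncomputable def Ad11 (y₁ y₂ : ℝ) : ℝ :=
  1 - (1/2) * Real.sin (2 * Real.pi * y₁) * Real.sin (2 * Real.pi * y₂)

/-- Entry `A^{div}₁₂`. -/
noncomputable def Ad12 (y₁ y₂ : ℝ) : ℝ :=
  (1/2) * Real.cos (2 * Real.pi * y₁) * Real.cos (2 * Real.pi * y₂)

/-- Entry `A^{div}₂₁`. -/
noncomputable def Ad21 (y₁ y₂ : ℝ) : ℝ :=
  -((1/2) * Real.cos (2 * Real.pi * y₁) * Real.cos (2 * Real.pi * y₂))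

/-- Entry `A^{div}₂₂`. -/
noncomputable def Ad22 (y₁ y₂ : ℝ) : ℝ :=
  1 + (1/2) * Real.sin (2 * Real.pi * y₁) * Real.sin (2 * Real.pi * y₂)

open Real in
private lemma hasDerivAt_sin2pi (x : ℝ) :
    HasDerivAt (fun t => Real.sin (2*π*t)) (2*π*Real.cos (2*π*x)) x := by
  have h : HasDerivAt (fun t : ℝ => 2*π*t) (2*π) x := by
    simpa using (hasDerivAt_id x).const_mul (2*π)
  simpa [mul_comm] using h.sin

open Real in
private lemma hasDerivAt_cos2pi (x : ℝ) :
    HasDerivAt (fun t => Real.cos (2*π*t)) (-(2*π*Real.sin (2*π*x))) x := by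
  have h : HasDerivAt (fun t : ℝ => 2*π*t) (2*π) x := by
    simpa using (hasDerivAt_id x).const_mul (2*π)
  simpa [mul_comm] using h.cos

open Real in
private lemma rr_ne_zero (y₁ y₂ : ℝ) : rr y₁ y₂ ≠ 0 := by
  unfold rr
  have h1 := Real.neg_one_le_cos (2*π*y₁)
  have h2 := Real.cos_le_one (2*π*y₁)
  have h3 := Real.neg_one_le_sin (2*π*y₁)
  have h4 := Real.sin_le_one (2*π*y₁)
  have h5 := Real.neg_one_le_sin (2*π*y₂)
  have h6 := Real.sin_le_one (2*π*y₂)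
  nlinarith [sq_nonneg (Real.sin (2*π*y₂)),
    sq_nonneg (Real.cos (2*π*y₁) - 2*Real.sin (2*π*y₁))]

private lemma p1_eq (u : ℝ → ℝ → ℝ) (hu : ContDiff ℝ 2 (Function.uncurry u)) (x y : ℝ) :
    p1 u x y = fderiv ℝ (Function.uncurry u) (x, y) (1, 0) := by
  have hFd : Differentiable ℝ (Function.uncurry u) := hu.differentiable two_ne_zero
  exact ((hFd (x, y)).hasFDerivAt.comp_hasDerivAt x
    (HasDerivAt.prodMk (hasDerivAt_id x) (hasDerivAt_const x y))).deriv

private lemma p2_eq (u : ℝ → ℝ → ℝ) (hu : ContDiff ℝ 2 (Function.uncurry u)) (x y : ℝ) :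
    p2 u x y = fderiv ℝ (Function.uncurry u) (x, y) (0, 1) := by
  have hFd : Differentiable ℝ (Function.uncurry u) := hu.differentiable two_ne_zero
  exact ((hFd (x, y)).hasFDerivAt.comp_hasDerivAt y
    (HasDerivAt.prodMk (hasDerivAt_const y x) (hasDerivAt_id y))).deriv

private lemma snd_deriv1 (u : ℝ → ℝ → ℝ) (hu : ContDiff ℝ 2 (Function.uncurry u))
    (x y : ℝ) (v : ℝ × ℝ) :
    HasDerivAt (fun t => fderiv ℝ (Function.uncurry u) (t, y) v)
      (fderiv ℝ (fderiv ℝ (Function.uncurry u)) (x, y) (1, 0) v) x := by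
  have hfd : ContDiff ℝ 1 (fderiv ℝ (Function.uncurry u)) := hu.fderiv_right le_rfl
  have h1 : HasFDerivAt (fun p => fderiv ℝ (Function.uncurry u) p v)
      ((ContinuousLinearMap.apply ℝ ℝ v).comp (fderiv ℝ (fderiv ℝ (Function.uncurry u)) (x, y)))
      (x, y) :=
    (ContinuousLinearMap.apply ℝ ℝ v).hasFDerivAt.comp (x, y)
      ((hfd.differentiable one_ne_zero (x, y)).hasFDerivAt)
  exact h1.comp_hasDerivAt x (HasDerivAt.prodMk (hasDerivAt_id x) (hasDerivAt_const x y))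

private lemma snd_deriv2 (u : ℝ → ℝ → ℝ) (hu : ContDiff ℝ 2 (Function.uncurry u))
    (x y : ℝ) (v : ℝ × ℝ) :
    HasDerivAt (fun t => fderiv ℝ (Function.uncurry u) (x, t) v)
      (fderiv ℝ (fderiv ℝ (Function.uncurry u)) (x, y) (0, 1) v) y := by
  have hfd : ContDiff ℝ 1 (fderiv ℝ (Function.uncurry u)) := hu.fderiv_right le_rfl
  have h1 : HasFDerivAt (fun p => fderiv ℝ (Function.uncurry u) p v)
      ((ContinuousLinearMap.apply ℝ ℝ v).comp (fderiv ℝ (fderiv ℝ (Function.uncurry u)) (x, y)))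
      (x, y) :=
    (ContinuousLinearMap.apply ℝ ℝ v).hasFDerivAt.comp (x, y)
      ((hfd.differentiable one_ne_zero (x, y)).hasFDerivAt)
  exact h1.comp_hasDerivAt y (HasDerivAt.prodMk (hasDerivAt_const y x) (hasDerivAt_id y))

open Real in
/-- For every twice continuously differentiable `u : ℝ² → ℝ` one has
`∇·(A^{div}∇u) = r (A : D²u)` pointwise. -/
theorem divergence_form_reduction (u : ℝ → ℝ → ℝ)
    (hu : ContDiff ℝ 2 (Function.uncurry u)) :
    ∀ y₁ y₂ : ℝ,
      p1 (fun s t => Ad11 s t * p1 u s t + Ad12 s t * p2 u s t) y₁ y₂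
        + p2 (fun s t => Ad21 s t * p1 u s t + Ad22 s t * p2 u s t) y₁ y₂
      = rr y₁ y₂ * (a11 y₁ y₂ * p1 (p1 u) y₁ y₂ + a22 y₁ y₂ * p2 (p2 u) y₁ y₂) := by
  intro y₁ y₂
  have hr := rr_ne_zero y₁ y₂
  set f2 := fderiv ℝ (fderiv ℝ (Function.uncurry u)) (y₁, y₂) with hf2
  -- partial derivatives of p1 u, p2 u along coordinate lines
  have hP1x : HasDerivAt (fun t => p1 u t y₂) (f2 (1,0) (1,0)) y₁ := by
    have hfun : (fun t => p1 u t y₂)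
        = fun t => fderiv ℝ (Function.uncurry u) (t, y₂) (1,0) :=
      funext fun t => p1_eq u hu t y₂
    rw [hfun, hf2]; exact snd_deriv1 u hu y₁ y₂ (1,0)
  have hP2x : HasDerivAt (fun t => p2 u t y₂) (f2 (1,0) (0,1)) y₁ := by
    have hfun : (fun t => p2 u t y₂)
        = fun t => fderiv ℝ (Function.uncurry u) (t, y₂) (0,1) :=
      funext fun t => p2_eq u hu t y₂
    rw [hfun, hf2]; exact snd_deriv1 u hu y₁ y₂ (0,1)
  have hP1y : HasDerivAt (fun t => p1 u y₁ t) (f2 (0,1) (1,0)) y₂ := by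
    have hfun : (fun t => p1 u y₁ t)
        = fun t => fderiv ℝ (Function.uncurry u) (y₁, t) (1,0) :=
      funext fun t => p1_eq u hu y₁ t
    rw [hfun, hf2]; exact snd_deriv2 u hu y₁ y₂ (1,0)
  have hP2y : HasDerivAt (fun t => p2 u y₁ t) (f2 (0,1) (0,1)) y₂ := by
    have hfun : (fun t => p2 u y₁ t)
        = fun t => fderiv ℝ (Function.uncurry u) (y₁, t) (0,1) :=
      funext fun t => p2_eq u hu y₁ t
    rw [hfun, hf2]; exact snd_deriv2 u hu y₁ y₂ (0,1)
  -- second partial derivatives of u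
  have E11 : p1 (p1 u) y₁ y₂ = f2 (1,0) (1,0) := hP1x.deriv
  have E22 : p2 (p2 u) y₁ y₂ = f2 (0,1) (0,1) := hP2y.deriv
  -- symmetry of the second derivative
  have hsym : f2 (0,1) (1,0) = f2 (1,0) (0,1) :=
    (hu.contDiffAt.isSymmSndFDerivAt (by norm_num)) _ _
  -- derivatives of the coefficient matrices
  have hA11x : HasDerivAt (fun t => Ad11 t y₂)
      (-(1/2 * (2*π*Real.cos (2*π*y₁)) * Real.sin (2*π*y₂))) y₁ := by
    unfold Ad11
    exact (((hasDerivAt_sin2pi y₁).const_mul (1/2)).mul_const _).const_sub 1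
  have hA12x : HasDerivAt (fun t => Ad12 t y₂)
      (1/2 * (-(2*π*Real.sin (2*π*y₁))) * Real.cos (2*π*y₂)) y₁ := by
    unfold Ad12
    exact ((hasDerivAt_cos2pi y₁).const_mul (1/2)).mul_const _
  have hA21y : HasDerivAt (fun t => Ad21 y₁ t)
      (-(1/2 * Real.cos (2*π*y₁) * (-(2*π*Real.sin (2*π*y₂))))) y₂ := by
    unfold Ad21
    exact (((hasDerivAt_cos2pi y₂).const_mul (1/2 * Real.cos (2*π*y₁))).congr_deriv
      (by ring)).neg
  have hA22y : HasDerivAt (fun t => Ad22 y₁ t)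
      (1/2 * Real.sin (2*π*y₁) * (2*π*Real.cos (2*π*y₂))) y₂ := by
    unfold Ad22
    exact ((hasDerivAt_sin2pi y₂).const_mul (1/2 * Real.sin (2*π*y₁))).congr_deriv
      (by ring) |>.const_add 1
  -- compute the two divergence terms
  have H1 : HasDerivAt (fun s => Ad11 s y₂ * p1 u s y₂ + Ad12 s y₂ * p2 u s y₂) _ y₁ := (hA11x.mul hP1x).add (hA12x.mul hP2x)
  have H2 : HasDerivAt (fun t => Ad21 y₁ t * p1 u y₁ t + Ad22 y₁ t * p2 u y₁ t) _ y₂ := (hA21y.mul hP1y).add (hA22y.mul hP2y)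
  show deriv (fun s => Ad11 s y₂ * p1 u s y₂ + Ad12 s y₂ * p2 u s y₂) y₁
      + deriv (fun t => Ad21 y₁ t * p1 u y₁ t + Ad22 y₁ t * p2 u y₁ t) y₂
    = rr y₁ y₂ * (a11 y₁ y₂ * p1 (p1 u) y₁ y₂ + a22 y₁ y₂ * p2 (p2 u) y₁ y₂)
  have hkey : ∀ P Q : ℝ, rr y₁ y₂ * (a11 y₁ y₂ * P + a22 y₁ y₂ * Q)
      = Ad11 y₁ y₂ * P + Ad22 y₁ y₂ * Q := by
    intro P Q
    simp only [a11, a22, Ad11, Ad22]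
    field_simp
  rw [H1.deriv, H2.deriv, E11, E22, hsym, hkey]
  simp only [Ad11, Ad12, Ad21, Ad22]
  ring
end

section
/- Let n ≥ 1, Ω ⊆ ℝⁿ open, ε > 0. Let A : ℝⁿ → ℝ^{n×n} have symmetric values with entries a_{ij}, and let Ā ∈ ℝ^{n×n} be a constant symmetric matrix with entries ā_{ij}. Suppose: f : Ω → ℝ; uᵋ : Ω → ℝ is twice differentiable with −A(x/ε):D²uᵋ(x) = f(x) for all x ∈ Ω; u : Ω → ℝ is four times continuously differentiable with −Ā:D²u(x) = f(x) for all x ∈ Ω; for each k,l ∈ {1,…,n}, v^{kl} : ℝⁿ → ℝ is twice continuously differentiable with −A(y):D²v^{kl}(y) = a_{kl}(y) − ā_{kl} for all y ∈ ℝⁿ; and θᵋ : Ω → ℝ is twice differentiable with A(x/ε):D²θᵋ(x) = 0 for all x ∈ Ω. Define φᵋ(x) := ε² ( ∑_{k,l=1}^{n} v^{kl}(x/ε) ∂²_{kl}u(x) + θᵋ(x) ). Then for every x ∈ Ω: −A(x/ε):D²(uᵋ − u − φᵋ)(x) = ε ∑_{i,j,k,l=1}^{n} a_{ij}(x/ε)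 [ 2 ∂_i v^{kl}(x/ε) ∂³_{jkl}u(x) + ε v^{kl}(x/ε) ∂⁴_{ijkl}u(x) ]. -/
/-- The partial derivative `∂_i f` of `f : ℝⁿ → ℝ`, as the Fréchet derivative applied to the
`i`-th standard basis vector. -/
noncomputable def pd {n : ℕ} (i : Fin n) (f : (Fin n → ℝ) → ℝ) : (Fin n → ℝ) → ℝ :=
  fun x => fderiv ℝ f x (Pi.single i 1)

/-- `f` is twice differentiable on `Ω`: it is differentiable on `Ω` and so are all its first
partial derivatives. -/
def TwiceDiffOn {n : ℕ} (f : (Fin n → ℝ) → ℝ) (Ω : Set (Fin n → ℝ)) : Prop :=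
  DifferentiableOn ℝ f Ω ∧ ∀ i : Fin n, DifferentiableOn ℝ (pd i f) Ω

section helpers
variable {n : ℕ} {i : Fin n} {f g : (Fin n → ℝ) → ℝ} {x : Fin n → ℝ}

lemma pd_sub (hf : DifferentiableAt ℝ f x) (hg : DifferentiableAt ℝ g x) :
    pd i (fun y => f y - g y) x = pd i f x - pd i g x := by
  simp [pd, fderiv_fun_sub hf hg]

lemma pd_add (hf : DifferentiableAt ℝ f x) (hg : DifferentiableAt ℝ g x) :
    pd i (fun y => f y + g y) x = pd i f x + pd i g x := by
  simp [pd, fderiv_fun_add hf hg]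

lemma pd_const_mul (c : ℝ) (hf : DifferentiableAt ℝ f x) :
    pd i (fun y => c * f y) x = c * pd i f x := by
  simp [pd, fderiv_const_mul hf c]

lemma pd_mul (hf : DifferentiableAt ℝ f x) (hg : DifferentiableAt ℝ g x) :
    pd i (fun y => f y * g y) x = pd i f x * g x + f x * pd i g x := by
  simp [pd, fderiv_fun_mul hf hg]; ring

lemma pd_sum {ι : Type*} (s : Finset ι) (F : ι → (Fin n → ℝ) → ℝ)
    (h : ∀ a ∈ s, DifferentiableAt ℝ (F a) x) :
    pd i (fun y => ∑ a ∈ s, F a y) x = ∑ a ∈ s, pd i (F a) x := by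
  simp [pd, fderiv_fun_sum h]

lemma pd_comp_smul (c : ℝ) (h : DifferentiableAt ℝ g (c • x)) :
    pd i (fun y => g (c • y)) x = c * pd i g (c • x) := by
  have hs : HasFDerivAt (fun y : Fin n → ℝ => c • y)
      (c • ContinuousLinearMap.id ℝ (Fin n → ℝ)) x := (hasFDerivAt_id x).const_smul c
  have h2 : HasFDerivAt (fun y : Fin n → ℝ => g (c • y))
      ((fderiv ℝ g (c • x)).comp (c • ContinuousLinearMap.id ℝ (Fin n → ℝ))) x :=
    h.hasFDerivAt.comp x hs
  rw [pd, h2.fderiv]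
  simp [mul_comm, pd]

lemma pd_congr {Ω : Set (Fin n → ℝ)} (hΩ : IsOpen Ω) (hx : x ∈ Ω)
    (h : ∀ y ∈ Ω, f y = g y) : pd i f x = pd i g x := by
  have : f =ᶠ[nhds x] g := Filter.eventuallyEq_of_mem (hΩ.mem_nhds hx) h
  rw [pd, pd, this.fderiv_eq]

lemma contDiffOn_pd {m : ℕ} {N : WithTop ℕ∞} {Ω : Set (Fin n → ℝ)} (hΩ : IsOpen Ω)
    (hf : ContDiffOn ℝ N f Ω) (hm : (m : WithTop ℕ∞) + 1 ≤ N) :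
    ContDiffOn ℝ m (pd i f) Ω := by
  have h1 : ContDiffOn ℝ m (fderiv ℝ f) Ω := hf.fderiv_of_isOpen hΩ hm
  exact (ContinuousLinearMap.apply ℝ ℝ (Pi.single i 1)).contDiff.comp_contDiffOn h1

lemma contDiff_pd {m : ℕ} {N : WithTop ℕ∞} (hf : ContDiff ℝ N f) (hm : (m : WithTop ℕ∞) + 1 ≤ N) :
    ContDiff ℝ m (pd i f) := by
  have h1 : ContDiff ℝ m (fderiv ℝ f) := hf.fderiv_right hm
  exact (ContinuousLinearMap.apply ℝ ℝ (Pi.single i 1)).contDiff.comp h1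

end helpers

section sums
variable {n : ℕ}

lemma sum2_congr {g h : Fin n → Fin n → ℝ} (e : ∀ i j, g i j = h i j) :
    ∑ i, ∑ j, g i j = ∑ i, ∑ j, h i j := by
  exact Finset.sum_congr rfl fun i _ => Finset.sum_congr rfl fun j _ => e i j

lemma sum2_neg (g : Fin n → Fin n → ℝ) :
    ∑ i, ∑ j, -g i j = -∑ i, ∑ j, g i j := by simp

lemma sum2_add (g h : Fin n → Fin n → ℝ) :
    ∑ i, ∑ j, (g i j + h i j) = (∑ i, ∑ j, g i j) + ∑ i, ∑ j, h i j := by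
  simp [Finset.sum_add_distrib]

lemma sum2_sub (g h : Fin n → Fin n → ℝ) :
    ∑ i, ∑ j, (g i j - h i j) = (∑ i, ∑ j, g i j) - ∑ i, ∑ j, h i j := by
  simp [Finset.sum_sub_distrib]

lemma sum2_mul (c : ℝ) (g : Fin n → Fin n → ℝ) :
    ∑ i, ∑ j, c * g i j = c * ∑ i, ∑ j, g i j := by
  simp [Finset.mul_sum]

lemma sum2_swap (g : Fin n → Fin n → ℝ) :
    ∑ i, ∑ j, g i j = ∑ i, ∑ j, g j i := Finset.sum_comm

lemma sum4_congr {g h : Fin n → Fin n → Fin n → Fin n → ℝ}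
    (e : ∀ i j k l, g i j k l = h i j k l) :
    ∑ i, ∑ j, ∑ k, ∑ l, g i j k l = ∑ i, ∑ j, ∑ k, ∑ l, h i j k l :=
  Finset.sum_congr rfl fun i _ => Finset.sum_congr rfl fun j _ =>
    Finset.sum_congr rfl fun k _ => Finset.sum_congr rfl fun l _ => e i j k l

lemma sum4_add (g h : Fin n → Fin n → Fin n → Fin n → ℝ) :
    ∑ i, ∑ j, ∑ k, ∑ l, (g i j k l + h i j k l)
      = (∑ i, ∑ j, ∑ k, ∑ l, g i j k l) + ∑ i, ∑ j, ∑ k, ∑ l, h i j k l := by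
  simp [Finset.sum_add_distrib]

lemma sum4_mul (c : ℝ) (g : Fin n → Fin n → Fin n → Fin n → ℝ) :
    ∑ i, ∑ j, ∑ k, ∑ l, c * g i j k l = c * ∑ i, ∑ j, ∑ k, ∑ l, g i j k l := by
  simp [Finset.mul_sum]

lemma sum4_swap12 (g : Fin n → Fin n → Fin n → Fin n → ℝ) :
    ∑ i, ∑ j, ∑ k, ∑ l, g i j k l = ∑ i, ∑ j, ∑ k, ∑ l, g j i k l :=
  sum2_swap (fun i j => ∑ k, ∑ l, g i j k l)

lemma sum4_kl_out (g : Fin n → Fin n → Fin n → Fin n → ℝ) :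
    ∑ i, ∑ j, ∑ k, ∑ l, g i j k l = ∑ k, ∑ l, ∑ i, ∑ j, g i j k l := by
  calc ∑ i, ∑ j, ∑ k, ∑ l, g i j k l
      = ∑ i, ∑ k, ∑ j, ∑ l, g i j k l :=
        Finset.sum_congr rfl fun i _ => Finset.sum_comm
    _ = ∑ k, ∑ i, ∑ j, ∑ l, g i j k l := Finset.sum_comm
    _ = ∑ k, ∑ i, ∑ l, ∑ j, g i j k l :=
        Finset.sum_congr rfl fun k _ => Finset.sum_congr rfl fun i _ => Finset.sum_comm
    _ = ∑ k, ∑ l, ∑ i, ∑ j, g i j k l :=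
        Finset.sum_congr rfl fun k _ => Finset.sum_comm

end sums

lemma final_algebra {n : ℕ} (ε fx : ℝ) (hε : ε ≠ 0)
    (B Abar Q P Θ V : Fin n → Fin n → ℝ)
    (V1 U3 : Fin n → Fin n → Fin n → ℝ)
    (V2 U4 : Fin n → Fin n → Fin n → Fin n → ℝ)
    (hBsymm : ∀ i j, B i j = B j i)
    (hA : -(∑ i, ∑ j, B i j * P i j) = fx)
    (hQ : -(∑ i, ∑ j, Abar i j * Q i j) = fx)
    (hC : ∀ k l, -(∑ i, ∑ j, B i j * V2 i j k l) = B k l - Abar k l)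
    (hD : (∑ i, ∑ j, B i j * Θ i j) = 0) :
    -(∑ i, ∑ j, B i j * (P i j - Q i j - ε ^ 2 * ((∑ k, ∑ l,
        (ε⁻¹ * ε⁻¹ * V2 i j k l * Q k l + ε⁻¹ * V1 j k l * U3 i k l
          + ε⁻¹ * V1 i k l * U3 j k l + V k l * U4 i j k l)) + Θ i j)))
      = ε * ∑ i, ∑ j, ∑ k, ∑ l, B i j *
          (2 * V1 i k l * U3 j k l + ε * V k l * U4 i j k l) := by
  set S1 := ∑ i, ∑ j, B i j * P i j with hS1
  set S2 := ∑ i, ∑ j, B i j * Q i j with hS2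
  set S4 := ∑ i, ∑ j, B i j * Θ i j with hS4
  set T1 := ∑ i, ∑ j, ∑ k, ∑ l, B i j * (ε⁻¹ * ε⁻¹ * V2 i j k l * Q k l) with hT1
  set T2 := ∑ i, ∑ j, ∑ k, ∑ l, B i j * (ε⁻¹ * V1 j k l * U3 i k l) with hT2
  set T3 := ∑ i, ∑ j, ∑ k, ∑ l, B i j * (ε⁻¹ * V1 i k l * U3 j k l) with hT3
  set T4 := ∑ i, ∑ j, ∑ k, ∑ l, B i j * (V k l * U4 i j k l) with hT4
  set W3 := ∑ i, ∑ j, ∑ k, ∑ l, B i j * (V1 i k l * U3 j k l) with hW3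
  set W4 := ∑ i, ∑ j, ∑ k, ∑ l, B i j * (V k l * U4 i j k l) with hW4
  -- Step 1 : expand the left-hand side
  have step1 : -(∑ i, ∑ j, B i j * (P i j - Q i j - ε ^ 2 * ((∑ k, ∑ l,
        (ε⁻¹ * ε⁻¹ * V2 i j k l * Q k l + ε⁻¹ * V1 j k l * U3 i k l
          + ε⁻¹ * V1 i k l * U3 j k l + V k l * U4 i j k l)) + Θ i j)))
      = -S1 + S2 + ε ^ 2 * T1 + ε ^ 2 * T2 + ε ^ 2 * T3 + ε ^ 2 * T4 + ε ^ 2 * S4 := by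
    have e : ∀ i j : Fin n, -(B i j * (P i j - Q i j - ε ^ 2 * ((∑ k, ∑ l,
          (ε⁻¹ * ε⁻¹ * V2 i j k l * Q k l + ε⁻¹ * V1 j k l * U3 i k l
            + ε⁻¹ * V1 i k l * U3 j k l + V k l * U4 i j k l)) + Θ i j)))
        = -(B i j * P i j) + B i j * Q i j
          + ε ^ 2 * (∑ k, ∑ l, (B i j * (ε⁻¹ * ε⁻¹ * V2 i j k l * Q k l)
              + B i j * (ε⁻¹ * V1 j k l * U3 i k l)
              + B i j * (ε⁻¹ * V1 i k l * U3 j k l)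
              + B i j * (V k l * U4 i j k l)))
          + ε ^ 2 * (B i j * Θ i j) := by
      intro i j
      have h1 : B i j * (∑ k, ∑ l,
          (ε⁻¹ * ε⁻¹ * V2 i j k l * Q k l + ε⁻¹ * V1 j k l * U3 i k l
            + ε⁻¹ * V1 i k l * U3 j k l + V k l * U4 i j k l))
          = ∑ k, ∑ l, (B i j * (ε⁻¹ * ε⁻¹ * V2 i j k l * Q k l)
              + B i j * (ε⁻¹ * V1 j k l * U3 i k l)
              + B i j * (ε⁻¹ * V1 i k l * U3 j k l)
              + B i j * (V k l * U4 i j k l)) := by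
        rw [Finset.mul_sum]
        refine Finset.sum_congr rfl fun k _ => ?_
        rw [Finset.mul_sum]
        exact Finset.sum_congr rfl fun l _ => by ring
      linear_combination ε ^ 2 * h1
    calc -(∑ i, ∑ j, B i j * (P i j - Q i j - ε ^ 2 * ((∑ k, ∑ l,
          (ε⁻¹ * ε⁻¹ * V2 i j k l * Q k l + ε⁻¹ * V1 j k l * U3 i k l
            + ε⁻¹ * V1 i k l * U3 j k l + V k l * U4 i j k l)) + Θ i j)))
        = ∑ i, ∑ j, -(B i j * (P i j - Q i j - ε ^ 2 * ((∑ k, ∑ l,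
          (ε⁻¹ * ε⁻¹ * V2 i j k l * Q k l + ε⁻¹ * V1 j k l * U3 i k l
            + ε⁻¹ * V1 i k l * U3 j k l + V k l * U4 i j k l)) + Θ i j))) := (sum2_neg _).symm
      _ = ∑ i, ∑ j, (-(B i j * P i j) + B i j * Q i j
          + ε ^ 2 * (∑ k, ∑ l, (B i j * (ε⁻¹ * ε⁻¹ * V2 i j k l * Q k l)
              + B i j * (ε⁻¹ * V1 j k l * U3 i k l)
              + B i j * (ε⁻¹ * V1 i k l * U3 j k l)
              + B i j * (V k l * U4 i j k l)))
          + ε ^ 2 * (B i j * Θ i j)) := sum2_congr e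
      _ = -S1 + S2 + ε ^ 2 * T1 + ε ^ 2 * T2 + ε ^ 2 * T3 + ε ^ 2 * T4 + ε ^ 2 * S4 := by
          rw [sum2_add, sum2_add, sum2_add, sum2_neg, sum2_mul, sum2_mul]
          rw [show (∑ i, ∑ j, ∑ k, ∑ l, (B i j * (ε⁻¹ * ε⁻¹ * V2 i j k l * Q k l)
              + B i j * (ε⁻¹ * V1 j k l * U3 i k l)
              + B i j * (ε⁻¹ * V1 i k l * U3 j k l)
              + B i j * (V k l * U4 i j k l))) = T1 + T2 + T3 + T4 by
            rw [hT1, hT2, hT3, hT4, ← sum4_add, ← sum4_add, ← sum4_add]]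
          ring
  rw [step1]
  -- known sums
  have hS1v : -S1 = fx := hA
  have hS4v : S4 = 0 := hD
  -- T1
  have hT1v : ε ^ 2 * T1 = -fx - S2 := by
    have h1 : T1 = ∑ k, ∑ l, (ε⁻¹ * ε⁻¹ * Q k l * (Abar k l - B k l)) := by
      rw [hT1, sum4_kl_out]
      refine Finset.sum_congr rfl fun k _ => Finset.sum_congr rfl fun l _ => ?_
      have h2 : ∑ i, ∑ j, B i j * (ε⁻¹ * ε⁻¹ * V2 i j k l * Q k l)
          = (ε⁻¹ * ε⁻¹ * Q k l) * ∑ i, ∑ j, B i j * V2 i j k l := by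
        rw [← sum2_mul]; exact sum2_congr fun i j => by ring
      rw [h2]
      have h3 : ∑ i, ∑ j, B i j * V2 i j k l = Abar k l - B k l := by
        have := hC k l; linarith
      rw [h3]
    rw [h1, ← sum2_mul]
    have hee : ∀ k l : Fin n, ε ^ 2 * (ε⁻¹ * ε⁻¹ * Q k l * (Abar k l - B k l))
        = Abar k l * Q k l - B k l * Q k l := by
      intro k l; field_simp
    rw [sum2_congr hee, sum2_sub]
    have : ∑ i, ∑ j, Abar i j * Q i j = -fx := by linarith [hQ]
    rw [this, hS2]
  -- T2 = T3
  have hT23 : T2 = T3 := by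
    rw [hT2, hT3]
    calc ∑ i, ∑ j, ∑ k, ∑ l, B i j * (ε⁻¹ * V1 j k l * U3 i k l)
        = ∑ i, ∑ j, ∑ k, ∑ l, B j i * (ε⁻¹ * V1 i k l * U3 j k l) := sum4_swap12 _
      _ = ∑ i, ∑ j, ∑ k, ∑ l, B i j * (ε⁻¹ * V1 i k l * U3 j k l) :=
          sum4_congr fun i j k l => by rw [hBsymm i j]
  have hT3v : ε ^ 2 * T3 = ε * W3 := by
    have h1 : T3 = ε⁻¹ * W3 := by
      rw [hT3, hW3, ← sum4_mul]
      exact sum4_congr fun i j k l => by ring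
    rw [h1]
    field_simp
  -- RHS
  have hRHS : ε * ∑ i, ∑ j, ∑ k, ∑ l, B i j *
      (2 * V1 i k l * U3 j k l + ε * V k l * U4 i j k l) = 2 * ε * W3 + ε ^ 2 * W4 := by
    have h1 : ∑ i, ∑ j, ∑ k, ∑ l, B i j *
        (2 * V1 i k l * U3 j k l + ε * V k l * U4 i j k l)
        = 2 * W3 + ε * W4 := by
      rw [hW3, hW4, ← sum4_mul 2, ← sum4_mul ε, ← sum4_add]
      exact sum4_congr fun i j k l => by ring
    rw [h1]; ring
  rw [hRHS, hS1v, hS4v, hT23, hT3v, hT1v]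
  rw [show T4 = W4 from by rw [hT4, hW4]]
  ring

/-- The identity `−A(x/ε):D²(uᵋ − u − φᵋ) = ε ∑ a_{ij}(x/ε)[2 ∂_i v^{kl}(x/ε) ∂³_{jkl}u
+ ε v^{kl}(x/ε) ∂⁴_{ijkl}u]` on `Ω`, where
`φᵋ = ε²(∑ v^{kl}(·/ε) ∂²_{kl}u + θᵋ)`. -/
theorem corrected_equation_first_order {n : ℕ} (hn : 1 ≤ n)
    (Ω : Set (Fin n → ℝ)) (hΩ : IsOpen Ω)
    (ε : ℝ) (hε : 0 < ε)
    (A : (Fin n → ℝ) → Fin n → Fin n → ℝ)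
    (hAsymm : ∀ y i j, A y i j = A y j i)
    (Abar : Fin n → Fin n → ℝ) (hAbarSymm : ∀ i j, Abar i j = Abar j i)
    (f : (Fin n → ℝ) → ℝ)
    (uε u θε : (Fin n → ℝ) → ℝ)
    (huε : TwiceDiffOn uε Ω)
    (huεeq : ∀ x ∈ Ω, -(∑ i, ∑ j, A (ε⁻¹ • x) i j * pd i (pd j uε) x) = f x)
    (hu : ContDiffOn ℝ 4 u Ω)
    (hueq : ∀ x ∈ Ω, -(∑ i, ∑ j, Abar i j * pd i (pd j u) x) = f x)
    (v : Fin n → Fin n → (Fin n → ℝ) → ℝ)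
    (hv : ∀ k l, ContDiff ℝ 2 (v k l))
    (hveq : ∀ k l, ∀ y : Fin n → ℝ,
      -(∑ i, ∑ j, A y i j * pd i (pd j (v k l)) y) = A y k l - Abar k l)
    (hθ : TwiceDiffOn θε Ω)
    (hθeq : ∀ x ∈ Ω, (∑ i, ∑ j, A (ε⁻¹ • x) i j * pd i (pd j θε) x) = 0) :
    ∀ x ∈ Ω,
      -(∑ i, ∑ j, A (ε⁻¹ • x) i j *
          pd i (pd j (fun y => uε y - u y -
            ε ^ 2 * ((∑ k, ∑ l, v k l (ε⁻¹ • y) * pd k (pd l u) y) + θε y))) x)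
        = ε * ∑ i, ∑ j, ∑ k, ∑ l, A (ε⁻¹ • x) i j *
            (2 * pd i (v k l) (ε⁻¹ • x) * pd j (pd k (pd l u)) x
              + ε * v k l (ε⁻¹ • x) * pd i (pd j (pd k (pd l u))) x) := by
  intro x hx
  have hpd : ∀ i j : Fin n,
      pd i (pd j (fun y => uε y - u y -
            ε ^ 2 * ((∑ k, ∑ l, v k l (ε⁻¹ • y) * pd k (pd l u) y) + θε y))) x
      = pd i (pd j uε) x - pd i (pd j u) x - ε ^ 2 * ((∑ k, ∑ l,
          (ε⁻¹ * ε⁻¹ * pd i (pd j (v k l)) (ε⁻¹ • x) * pd k (pd l u) x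
            + ε⁻¹ * pd j (v k l) (ε⁻¹ • x) * pd i (pd k (pd l u)) x
            + ε⁻¹ * pd i (v k l) (ε⁻¹ • x) * pd j (pd k (pd l u)) x
            + v k l (ε⁻¹ • x) * pd i (pd j (pd k (pd l u))) x)) + pd i (pd j θε) x) := by
    intro i j
    -- differentiability facts
    have hu1 : ∀ l : Fin n, ContDiffOn ℝ 3 (pd l u) Ω := fun l => contDiffOn_pd hΩ hu (by norm_num)
    have hu2 : ∀ k l : Fin n, ContDiffOn ℝ 2 (pd k (pd l u)) Ω :=
      fun k l => contDiffOn_pd hΩ (hu1 l) (by norm_num)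
    have hu3 : ∀ j k l : Fin n, ContDiffOn ℝ 1 (pd j (pd k (pd l u))) Ω :=
      fun j k l => contDiffOn_pd hΩ (hu2 k l) (by norm_num)
    have du : ∀ y ∈ Ω, DifferentiableAt ℝ u y := fun y hy =>
      (hu.differentiableOn (by norm_num)).differentiableAt (hΩ.mem_nhds hy)
    have du1 : ∀ (l : Fin n), ∀ y ∈ Ω, DifferentiableAt ℝ (pd l u) y := fun l y hy =>
      ((hu1 l).differentiableOn (by norm_num)).differentiableAt (hΩ.mem_nhds hy)
    have du2 : ∀ (k l : Fin n), ∀ y ∈ Ω, DifferentiableAt ℝ (pd k (pd l u)) y := fun k l y hy =>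
      ((hu2 k l).differentiableOn (by norm_num)).differentiableAt (hΩ.mem_nhds hy)
    have du3 : ∀ (j k l : Fin n), ∀ y ∈ Ω, DifferentiableAt ℝ (pd j (pd k (pd l u))) y :=
      fun j k l y hy =>
        ((hu3 j k l).differentiableOn (by norm_num)).differentiableAt (hΩ.mem_nhds hy)
    have dv : ∀ k l, Differentiable ℝ (v k l) := fun k l => (hv k l).differentiable (by norm_num)
    have dv1 : ∀ (i k l : Fin n), Differentiable ℝ (pd i (v k l)) := fun i k l =>
      (contDiff_pd (m := 1) (hv k l) (by norm_num)).differentiable (by norm_num)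
    have dsc : Differentiable ℝ (fun y : Fin n → ℝ => ε⁻¹ • y) :=
      fun y => (differentiableAt_id.const_smul ε⁻¹)
    have dw : ∀ k l, Differentiable ℝ (fun y => v k l (ε⁻¹ • y)) :=
      fun k l => (dv k l).comp dsc
    have dw1 : ∀ (j k l : Fin n), Differentiable ℝ (fun y => pd j (v k l) (ε⁻¹ • y)) :=
      fun j k l => (dv1 j k l).comp dsc
    have duε : ∀ y ∈ Ω, DifferentiableAt ℝ uε y := fun y hy =>
      huε.1.differentiableAt (hΩ.mem_nhds hy)
    have duε1 : ∀ (j : Fin n), ∀ y ∈ Ω, DifferentiableAt ℝ (pd j uε) y := fun j y hy =>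
      (huε.2 j).differentiableAt (hΩ.mem_nhds hy)
    have dθ : ∀ y ∈ Ω, DifferentiableAt ℝ θε y := fun y hy =>
      hθ.1.differentiableAt (hΩ.mem_nhds hy)
    have dθ1 : ∀ (j : Fin n), ∀ y ∈ Ω, DifferentiableAt ℝ (pd j θε) y := fun j y hy =>
      (hθ.2 j).differentiableAt (hΩ.mem_nhds hy)
    -- first derivative, valid on all of Ω
    have hG : ∀ (j : Fin n), ∀ y ∈ Ω,
        pd j (fun z => uε z - u z -
            ε ^ 2 * ((∑ k, ∑ l, v k l (ε⁻¹ • z) * pd k (pd l u) z) + θε z)) y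
        = pd j uε y - pd j u y - ε ^ 2 * ((∑ k, ∑ l,
            (ε⁻¹ * pd j (v k l) (ε⁻¹ • y) * pd k (pd l u) y
              + v k l (ε⁻¹ • y) * pd j (pd k (pd l u)) y)) + pd j θε y) := by
      intro j y hy
      have dprod : ∀ k l : Fin n,
          DifferentiableAt ℝ (fun z => v k l (ε⁻¹ • z) * pd k (pd l u) z) y :=
        fun k l => ((dw k l) y).mul (du2 k l y hy)
      have dsuml : ∀ k : Fin n,
          DifferentiableAt ℝ (fun z => ∑ l, v k l (ε⁻¹ • z) * pd k (pd l u) z) y :=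
        fun k => DifferentiableAt.fun_sum (fun l _ => dprod k l)
      have dsum : DifferentiableAt ℝ
          (fun z => ∑ k, ∑ l, v k l (ε⁻¹ • z) * pd k (pd l u) z) y :=
        DifferentiableAt.fun_sum (fun k _ => dsuml k)
      have e1 : pd j (fun z => uε z - u z -
            ε ^ 2 * ((∑ k, ∑ l, v k l (ε⁻¹ • z) * pd k (pd l u) z) + θε z)) y
          = pd j (fun z => uε z - u z) y
            - pd j (fun z => ε ^ 2 * ((∑ k, ∑ l, v k l (ε⁻¹ • z) * pd k (pd l u) z) + θε z)) y :=
        pd_sub ((duε y hy).sub (du y hy)) ((dsum.add (dθ y hy)).const_mul _)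
      have e2 : pd j (fun z => uε z - u z) y = pd j uε y - pd j u y :=
        pd_sub (duε y hy) (du y hy)
      have e3 : pd j (fun z => ε ^ 2 * ((∑ k, ∑ l, v k l (ε⁻¹ • z) * pd k (pd l u) z) + θε z)) y
          = ε ^ 2 * pd j (fun z => (∑ k, ∑ l, v k l (ε⁻¹ • z) * pd k (pd l u) z) + θε z) y :=
        pd_const_mul _ (dsum.add (dθ y hy))
      have e4 : pd j (fun z => (∑ k, ∑ l, v k l (ε⁻¹ • z) * pd k (pd l u) z) + θε z) y
          = pd j (fun z => ∑ k, ∑ l, v k l (ε⁻¹ • z) * pd k (pd l u) z) y + pd j θε y :=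
        pd_add dsum (dθ y hy)
      have e5 : pd j (fun z => ∑ k, ∑ l, v k l (ε⁻¹ • z) * pd k (pd l u) z) y
          = ∑ k, ∑ l, pd j (fun z => v k l (ε⁻¹ • z) * pd k (pd l u) z) y := by
        rw [pd_sum Finset.univ (fun k => fun z => ∑ l, v k l (ε⁻¹ • z) * pd k (pd l u) z)
          (fun k _ => dsuml k)]
        exact Finset.sum_congr rfl fun k _ =>
          pd_sum Finset.univ (fun l => fun z => v k l (ε⁻¹ • z) * pd k (pd l u) z)
            (fun l _ => dprod k l)
      have e6 : ∀ k l : Fin n, pd j (fun z => v k l (ε⁻¹ • z) * pd k (pd l u) z) y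
          = ε⁻¹ * pd j (v k l) (ε⁻¹ • y) * pd k (pd l u) y
            + v k l (ε⁻¹ • y) * pd j (pd k (pd l u)) y := by
        intro k l
        rw [pd_mul ((dw k l) y) (du2 k l y hy),
          pd_comp_smul (g := v k l) ε⁻¹ ((dv k l) (ε⁻¹ • y))]
      rw [e1, e2, e3, e4, e5, Finset.sum_congr rfl fun k _ => Finset.sum_congr rfl fun l _ => e6 k l]
    -- second derivative at x
    have hcongr : pd i (pd j (fun y => uε y - u y -
          ε ^ 2 * ((∑ k, ∑ l, v k l (ε⁻¹ • y) * pd k (pd l u) y) + θε y))) x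
        = pd i (fun y => pd j uε y - pd j u y - ε ^ 2 * ((∑ k, ∑ l,
            (ε⁻¹ * pd j (v k l) (ε⁻¹ • y) * pd k (pd l u) y
              + v k l (ε⁻¹ • y) * pd j (pd k (pd l u)) y)) + pd j θε y)) x :=
      pd_congr hΩ hx (hG j)
    rw [hcongr]
    -- differentiability of the pieces of G j at x
    have dprod1 : ∀ k l : Fin n,
        DifferentiableAt ℝ (fun z => ε⁻¹ * pd j (v k l) (ε⁻¹ • z) * pd k (pd l u) z) x :=
      fun k l => (((dw1 j k l) x).const_mul ε⁻¹).mul (du2 k l x hx)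
    have dprod2 : ∀ k l : Fin n,
        DifferentiableAt ℝ (fun z => v k l (ε⁻¹ • z) * pd j (pd k (pd l u)) z) x :=
      fun k l => ((dw k l) x).mul (du3 j k l x hx)
    have dterm : ∀ k l : Fin n,
        DifferentiableAt ℝ (fun z => ε⁻¹ * pd j (v k l) (ε⁻¹ • z) * pd k (pd l u) z
          + v k l (ε⁻¹ • z) * pd j (pd k (pd l u)) z) x :=
      fun k l => (dprod1 k l).add (dprod2 k l)
    have dsuml : ∀ k : Fin n, DifferentiableAt ℝ (fun z => ∑ l,
        (ε⁻¹ * pd j (v k l) (ε⁻¹ • z) * pd k (pd l u) z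
          + v k l (ε⁻¹ • z) * pd j (pd k (pd l u)) z)) x :=
      fun k => DifferentiableAt.fun_sum (fun l _ => dterm k l)
    have dsum : DifferentiableAt ℝ (fun z => ∑ k, ∑ l,
        (ε⁻¹ * pd j (v k l) (ε⁻¹ • z) * pd k (pd l u) z
          + v k l (ε⁻¹ • z) * pd j (pd k (pd l u)) z)) x :=
      DifferentiableAt.fun_sum (fun k _ => dsuml k)
    have e1 : pd i (fun y => pd j uε y - pd j u y - ε ^ 2 * ((∑ k, ∑ l,
          (ε⁻¹ * pd j (v k l) (ε⁻¹ • y) * pd k (pd l u) y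
            + v k l (ε⁻¹ • y) * pd j (pd k (pd l u)) y)) + pd j θε y)) x
        = pd i (fun y => pd j uε y - pd j u y) x
          - pd i (fun y => ε ^ 2 * ((∑ k, ∑ l,
            (ε⁻¹ * pd j (v k l) (ε⁻¹ • y) * pd k (pd l u) y
              + v k l (ε⁻¹ • y) * pd j (pd k (pd l u)) y)) + pd j θε y)) x :=
      pd_sub ((duε1 j x hx).sub (du1 j x hx)) ((dsum.add (dθ1 j x hx)).const_mul _)
    have e2 : pd i (fun y => pd j uε y - pd j u y) x = pd i (pd j uε) x - pd i (pd j u) x :=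
      pd_sub (duε1 j x hx) (du1 j x hx)
    have e3 : pd i (fun y => ε ^ 2 * ((∑ k, ∑ l,
          (ε⁻¹ * pd j (v k l) (ε⁻¹ • y) * pd k (pd l u) y
            + v k l (ε⁻¹ • y) * pd j (pd k (pd l u)) y)) + pd j θε y)) x
        = ε ^ 2 * pd i (fun y => (∑ k, ∑ l,
          (ε⁻¹ * pd j (v k l) (ε⁻¹ • y) * pd k (pd l u) y
            + v k l (ε⁻¹ • y) * pd j (pd k (pd l u)) y)) + pd j θε y) x :=
      pd_const_mul _ (dsum.add (dθ1 j x hx))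
    have e4 : pd i (fun y => (∑ k, ∑ l,
          (ε⁻¹ * pd j (v k l) (ε⁻¹ • y) * pd k (pd l u) y
            + v k l (ε⁻¹ • y) * pd j (pd k (pd l u)) y)) + pd j θε y) x
        = pd i (fun y => ∑ k, ∑ l,
          (ε⁻¹ * pd j (v k l) (ε⁻¹ • y) * pd k (pd l u) y
            + v k l (ε⁻¹ • y) * pd j (pd k (pd l u)) y)) x + pd i (pd j θε) x :=
      pd_add dsum (dθ1 j x hx)
    have e5 : pd i (fun y => ∑ k, ∑ l,
          (ε⁻¹ * pd j (v k l) (ε⁻¹ • y) * pd k (pd l u) y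
            + v k l (ε⁻¹ • y) * pd j (pd k (pd l u)) y)) x
        = ∑ k, ∑ l, pd i (fun y =>
            ε⁻¹ * pd j (v k l) (ε⁻¹ • y) * pd k (pd l u) y
              + v k l (ε⁻¹ • y) * pd j (pd k (pd l u)) y) x := by
      rw [pd_sum Finset.univ _ (fun k _ => dsuml k)]
      exact Finset.sum_congr rfl fun k _ => pd_sum Finset.univ _ (fun l _ => dterm k l)
    have e6 : ∀ k l : Fin n, pd i (fun y =>
          ε⁻¹ * pd j (v k l) (ε⁻¹ • y) * pd k (pd l u) y
            + v k l (ε⁻¹ • y) * pd j (pd k (pd l u)) y) x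
        = ε⁻¹ * ε⁻¹ * pd i (pd j (v k l)) (ε⁻¹ • x) * pd k (pd l u) x
          + ε⁻¹ * pd j (v k l) (ε⁻¹ • x) * pd i (pd k (pd l u)) x
          + ε⁻¹ * pd i (v k l) (ε⁻¹ • x) * pd j (pd k (pd l u)) x
          + v k l (ε⁻¹ • x) * pd i (pd j (pd k (pd l u))) x := by
      intro k l
      rw [pd_add (dprod1 k l) (dprod2 k l),
        pd_mul (((dw1 j k l) x).const_mul ε⁻¹) (du2 k l x hx),
        pd_mul ((dw k l) x) (du3 j k l x hx),
        pd_const_mul ε⁻¹ ((dw1 j k l) x),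
        pd_comp_smul (g := pd j (v k l)) ε⁻¹ ((dv1 j k l) (ε⁻¹ • x)),
        pd_comp_smul (g := v k l) ε⁻¹ ((dv k l) (ε⁻¹ • x))]
      ring
    rw [e1, e2, e3, e4, e5,
      Finset.sum_congr rfl fun k _ => Finset.sum_congr rfl fun l _ => e6 k l]

  rw [sum2_congr (fun i j => by rw [hpd i j] :
    ∀ i j : Fin n, A (ε⁻¹ • x) i j *
      pd i (pd j (fun y => uε y - u y -
        ε ^ 2 * ((∑ k, ∑ l, v k l (ε⁻¹ • y) * pd k (pd l u) y) + θε y))) x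
    = A (ε⁻¹ • x) i j * (pd i (pd j uε) x - pd i (pd j u) x - ε ^ 2 * ((∑ k, ∑ l,
          (ε⁻¹ * ε⁻¹ * pd i (pd j (v k l)) (ε⁻¹ • x) * pd k (pd l u) x
            + ε⁻¹ * pd j (v k l) (ε⁻¹ • x) * pd i (pd k (pd l u)) x
            + ε⁻¹ * pd i (v k l) (ε⁻¹ • x) * pd j (pd k (pd l u)) x
            + v k l (ε⁻¹ • x) * pd i (pd j (pd k (pd l u))) x)) + pd i (pd j θε) x)))]
  exact final_algebra ε (f x) (ne_of_gt hε)
    (fun i j => A (ε⁻¹ • x) i j) Abar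
    (fun i j => pd i (pd j u) x) (fun i j => pd i (pd j uε) x)
    (fun i j => pd i (pd j θε) x) (fun k l => v k l (ε⁻¹ • x))
    (fun i k l => pd i (v k l) (ε⁻¹ • x)) (fun i k l => pd i (pd k (pd l u)) x)
    (fun i j k l => pd i (pd j (v k l)) (ε⁻¹ • x))
    (fun i j k l => pd i (pd j (pd k (pd l u))) x)
    (hAsymm (ε⁻¹ • x)) (huεeq x hx) (hueq x hx)
    (fun k l => hveq k l (ε⁻¹ • x)) (hθeq x hx)
end
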